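/- Let S be a nonempty finite set of natural numbers, each of whose elements is ≥ 2, containing no two consecutive integers (i.e. if i ∈ S then i+1 ∉ S), and let n = ∑_{i∈S} fib(i). Then n lies in the range of f on positive integers (i.e. ∃ x ≥ 1 with n = ⌊φ·x⌋) if and only if the minimum element of S is even; otherwise n is of the form ⌊φ·x⌋ + x for some x ≥ 1. -/

import Mathlib

noncomputable def phi : ℝ := (1 + Real.sqrt 5) / 2
noncomputable def f (n : ℕ) : ℕ := ⌊phi * n⌋₊
noncomputable def psi : ℝ := (1 - Real.sqrt 5) / 2
noncomputable def psi' : ℝ := (Real.sqrt 5 - 1) / 2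

lemma sqrt5_sq : Real.sqrt 5 ^ 2 = 5 := Real.sq_sqrt (by norm_num)
lemma sqrt5_gt : 2 < Real.sqrt 5 := by nlinarith [sqrt5_sq, Real.sqrt_nonneg 5]
lemma sqrt5_lt : Real.sqrt 5 < 3 := by nlinarith [sqrt5_sq, Real.sqrt_nonneg 5]
lemma psi'_pos : 0 < psi' := by unfold psi'; nlinarith [sqrt5_gt]
lemma psi'_lt_one : psi' < 1 := by unfold psi'; nlinarith [sqrt5_lt]
lemma psi'_sq : psi' ^ 2 = 1 - psi' := by unfold psi'; nlinarith [sqrt5_sq]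
lemma psi_eq : psi = -psi' := by unfold psi psi'; ring
lemma psi_sq : psi ^ 2 = psi + 1 := by unfold psi; nlinarith [sqrt5_sq]

lemma phi_fib (k : ℕ) : phi * (Nat.fib k : ℝ) = (Nat.fib (k+1) : ℝ) - psi ^ k := by
  induction k using Nat.twoStepInduction with
  | zero => simp [phi]
  | one => simp [phi, psi]; ring
  | more k ih1 ih2 =>
    have h1 : (Nat.fib (k+2) : ℝ) = Nat.fib k + Nat.fib (k+1) := by
      rw [Nat.fib_add_two]; push_cast; ring
    have h2 : (Nat.fib (k+2+1) : ℝ) = Nat.fib (k+1) + Nat.fib (k+2) := by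
      rw [show k+2+1 = (k+1)+2 from rfl, Nat.fib_add_two]; push_cast; ring
    rw [h1]
    have ih2' : phi * (Nat.fib (k+1) : ℝ) = (Nat.fib (k+2) : ℝ) - psi ^ (k+1) := ih2
    linear_combination ih1 + ih2' - h2 + psi ^ k * psi_sq

lemma psi'_key (j : ℕ) : psi' ^ (j+1) + psi' ^ (j+2) = psi' ^ j := by
  linear_combination psi' ^ j * psi'_sq

lemma sum_psi'_lt (T : Finset ℕ) (hc : ∀ i ∈ T, i+1 ∉ T) (m : ℕ) (hm : 1 ≤ m)
    (hT : ∀ i ∈ T, m ≤ i) : ∑ i ∈ T, psi' ^ i < psi' ^ (m-1) := by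
  induction T using Finset.strongInduction generalizing m with
  | _ T ih =>
    rcases T.eq_empty_or_nonempty with rfl | hne
    · simpa using pow_pos psi'_pos (m-1)
    · set m₀ := T.min' hne with hm₀
      have hm₀T : m₀ ∈ T := T.min'_mem hne
      have hmm₀ : m ≤ m₀ := hT _ hm₀T
      have herase : ∀ i ∈ T.erase m₀, m₀ + 2 ≤ i := by
        intro i hi
        obtain ⟨hne', hiT⟩ := Finset.mem_erase.mp hi
        have h1 : m₀ ≤ i := T.min'_le _ hiT
        have h2 : i ≠ m₀ + 1 := by rintro rfl; exact hc m₀ hm₀T hiT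
        omega
      have hrec : ∑ i ∈ T.erase m₀, psi' ^ i < psi' ^ (m₀ + 1) := by
        have hc' : ∀ i ∈ T.erase m₀, i + 1 ∉ T.erase m₀ := fun i hi h =>
          hc i (Finset.mem_of_mem_erase hi) (Finset.mem_of_mem_erase h)
        have := ih (T.erase m₀) (Finset.erase_ssubset hm₀T) hc' (m₀ + 2) (by omega) herase
        simpa using this
      have hsplit : ∑ i ∈ T, psi' ^ i = psi' ^ m₀ + ∑ i ∈ T.erase m₀, psi' ^ i :=
        (Finset.add_sum_erase T _ hm₀T).symm
      obtain ⟨j, hj⟩ : ∃ j, m₀ = j + 1 := ⟨m₀ - 1, by omega⟩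
      calc ∑ i ∈ T, psi' ^ i = psi' ^ m₀ + ∑ i ∈ T.erase m₀, psi' ^ i := hsplit
        _ < psi' ^ m₀ + psi' ^ (m₀ + 1) := by linarith
        _ = psi' ^ (j+1) + psi' ^ (j+2) := by rw [hj]
        _ = psi' ^ j := psi'_key j
        _ ≤ psi' ^ (m - 1) :=
          pow_le_pow_of_le_one (le_of_lt psi'_pos) (le_of_lt psi'_lt_one) (by omega)

lemma abs_psi : |psi| = psi' := by
  rw [psi_eq, abs_neg, abs_of_pos psi'_pos]

lemma sum_psi_bounds (T : Finset ℕ) (hne : T.Nonempty) (hc : ∀ i ∈ T, i+1 ∉ T)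
    (h1 : ∀ i ∈ T, 1 ≤ i) (hodd : Odd (T.min' hne)) :
    -1 < ∑ i ∈ T, psi ^ i ∧ ∑ i ∈ T, psi ^ i < 0 := by
  set m := T.min' hne with hm
  have hmT : m ∈ T := T.min'_mem hne
  have hm1 : 1 ≤ m := h1 _ hmT
  have herase : ∀ i ∈ T.erase m, m + 2 ≤ i := by
    intro i hi
    obtain ⟨hne', hiT⟩ := Finset.mem_erase.mp hi
    have := T.min'_le _ hiT
    have : i ≠ m + 1 := by rintro rfl; exact hc m hmT hiT
    omega
  have hc' : ∀ i ∈ T.erase m, i + 1 ∉ T.erase m := fun i hi h =>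
    hc i (Finset.mem_of_mem_erase hi) (Finset.mem_of_mem_erase h)
  have habs : |∑ i ∈ T.erase m, psi ^ i| < psi' ^ (m+1) := by
    calc |∑ i ∈ T.erase m, psi ^ i| ≤ ∑ i ∈ T.erase m, |psi ^ i| :=
          Finset.abs_sum_le_sum_abs _ _
      _ = ∑ i ∈ T.erase m, psi' ^ i := by
          refine Finset.sum_congr rfl fun i _ => ?_
          rw [abs_pow, abs_psi]
      _ < psi' ^ (m+2-1) := sum_psi'_lt _ hc' (m+2) (by omega) herase
      _ = psi' ^ (m+1) := by norm_num
  have hsplit : ∑ i ∈ T, psi ^ i = psi ^ m + ∑ i ∈ T.erase m, psi ^ i :=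
    (Finset.add_sum_erase T _ hmT).symm
  have hpm : psi ^ m = -psi' ^ m := by rw [psi_eq, hodd.neg_pow]
  obtain ⟨j, hj⟩ : ∃ j, m = j + 1 := ⟨m - 1, by omega⟩
  have hkey : psi' ^ m + psi' ^ (m+1) ≤ 1 := by
    have h1 : psi' ^ (j+1) + psi' ^ (j+2) = psi' ^ j := psi'_key j
    have h2 : psi' ^ j ≤ 1 :=
      pow_le_one₀ (le_of_lt psi'_pos) (le_of_lt psi'_lt_one)
    have e : m + 1 = j + 2 := by omega
    rw [hj]; rw [show j+1+1 = j+2 from rfl]; linarith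
  have habs1 := abs_lt.mp habs
  have hppos : 0 < psi' ^ m := pow_pos psi'_pos m
  have hpm1pos : 0 < psi' ^ (m+1) := pow_pos psi'_pos (m+1)
  constructor
  · rw [hsplit, hpm]; linarith [habs1.1]
  · rw [hsplit, hpm]
    have : psi' ^ (m+1) < psi' ^ m := by
      have := pow_lt_pow_right_of_lt_one₀ psi'_pos psi'_lt_one (show m < m + 1 by omega)
      exact this
    linarith [habs1.2]

lemma shifted_sum (S : Finset ℕ) (hS : S.Nonempty) (hcons : ∀ i ∈ S, i + 1 ∉ S) (s : ℕ)
    (hle : ∀ i ∈ S, s + 1 ≤ i) (hodd : Odd (S.min' hS - s)) :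
    -1 < ∑ i ∈ S, psi ^ (i - s) ∧ ∑ i ∈ S, psi ^ (i - s) < 0 := by
  set T := S.image (· - s) with hT
  have hinj : ∀ x ∈ S, ∀ y ∈ S, x - s = y - s → x = y := by
    intro x hx y hy h
    have := hle x hx; have := hle y hy; omega
  have hsum : ∑ j ∈ T, psi ^ j = ∑ i ∈ S, psi ^ (i - s) := Finset.sum_image hinj
  have hTne : T.Nonempty := hS.image _
  have hTc : ∀ j ∈ T, j + 1 ∉ T := by
    intro j hj hj1
    obtain ⟨i, hi, rfl⟩ := Finset.mem_image.mp hj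
    obtain ⟨i', hi', he⟩ := Finset.mem_image.mp hj1
    have := hle i hi; have := hle i' hi'
    have : i' = i + 1 := by omega
    exact hcons i hi (this ▸ hi')
  have hT1 : ∀ j ∈ T, 1 ≤ j := by
    intro j hj
    obtain ⟨i, hi, rfl⟩ := Finset.mem_image.mp hj
    have := hle i hi; omega
  have hTmin : T.min' hTne = S.min' hS - s := by
    apply le_antisymm
    · exact T.min'_le _ (Finset.mem_image.mpr ⟨S.min' hS, S.min'_mem hS, rfl⟩)
    · apply Finset.le_min'
      intro j hj
      obtain ⟨i, hi, rfl⟩ := Finset.mem_image.mp hj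
      have := S.min'_le _ hi; omega
  have := sum_psi_bounds T hTne hTc hT1 (hTmin ▸ hodd)
  rw [hsum] at this
  exact this

lemma phi_pos : 0 < phi := by unfold phi; nlinarith [sqrt5_gt]
lemma phi_sq : phi ^ 2 = phi + 1 := by unfold phi; nlinarith [sqrt5_sq]

lemma even_case (S : Finset ℕ) (hS : S.Nonempty) (h2 : ∀ i ∈ S, 2 ≤ i)
    (hcons : ∀ i ∈ S, i + 1 ∉ S) (heven : Even (S.min' hS)) :
    ∃ x : ℕ, 1 ≤ x ∧ (∑ i ∈ S, Nat.fib i) = f x := by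
  refine ⟨∑ i ∈ S, Nat.fib (i-1), ?_, ?_⟩
  · have : 0 < ∑ i ∈ S, Nat.fib (i-1) :=
      Finset.sum_pos (fun i hi => Nat.fib_pos.mpr (by have := h2 i hi; omega)) hS
    omega
  · have hodd : Odd (S.min' hS - 1) := by
      rw [Nat.odd_iff]; rw [Nat.even_iff] at heven
      have := h2 _ (S.min'_mem hS); omega
    obtain ⟨hl, hu⟩ := shifted_sum S hS hcons 1 (fun i hi => h2 i hi) hodd
    have hx : phi * ((∑ i ∈ S, Nat.fib (i-1) : ℕ) : ℝ)
        = ((∑ i ∈ S, Nat.fib i : ℕ) : ℝ) - ∑ i ∈ S, psi ^ (i-1) := by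
      push_cast
      rw [Finset.mul_sum, ← Finset.sum_sub_distrib]
      refine Finset.sum_congr rfl fun i hi => ?_
      have h := phi_fib (i-1)
      have e : i - 1 + 1 = i := by have := h2 i hi; omega
      rw [e] at h
      exact h
    have h0 : (0:ℝ) ≤ phi * ((∑ i ∈ S, Nat.fib (i-1) : ℕ) : ℝ) :=
      mul_nonneg phi_pos.le (Nat.cast_nonneg _)
    unfold f
    refine ((Nat.floor_eq_iff h0).mpr ⟨?_, ?_⟩).symm
    · rw [hx]; linarith
    · rw [hx]; push_cast; linarith

lemma odd_case (S : Finset ℕ) (hS : S.Nonempty) (h2 : ∀ i ∈ S, 2 ≤ i)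
    (hcons : ∀ i ∈ S, i + 1 ∉ S) (hodd : Odd (S.min' hS)) :
    ∃ x : ℕ, 1 ≤ x ∧ ((∑ i ∈ S, Nat.fib i : ℕ) : ℝ) < (phi + 1) * x ∧
      (phi + 1) * (x:ℝ) < ((∑ i ∈ S, Nat.fib i : ℕ) : ℝ) + 1 := by
  have hm3 : 3 ≤ S.min' hS := by
    have := h2 _ (S.min'_mem hS); rw [Nat.odd_iff] at hodd; omega
  have hle : ∀ i ∈ S, 2 + 1 ≤ i := fun i hi => le_trans hm3 (S.min'_le _ hi)
  have hodd2 : Odd (S.min' hS - 2) := by rw [Nat.odd_iff] at *; omega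
  obtain ⟨hl, hu⟩ := shifted_sum S hS hcons 2 hle hodd2
  refine ⟨∑ i ∈ S, Nat.fib (i-2), ?_, ?_, ?_⟩
  · have : 0 < ∑ i ∈ S, Nat.fib (i-2) :=
      Finset.sum_pos (fun i hi => Nat.fib_pos.mpr (by have := hle i hi; omega)) hS
    omega
  all_goals {
    have hx : (phi + 1) * ((∑ i ∈ S, Nat.fib (i-2) : ℕ) : ℝ)
        = ((∑ i ∈ S, Nat.fib i : ℕ) : ℝ) - ∑ i ∈ S, psi ^ (i-2) := by
      push_cast
      rw [Finset.mul_sum, ← Finset.sum_sub_distrib]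
      refine Finset.sum_congr rfl fun i hi => ?_
      have h := phi_fib (i-2)
      have e : i - 2 + 1 = i - 1 := by have := hle i hi; omega
      rw [e] at h
      have hfib : (Nat.fib i : ℝ) = Nat.fib (i-1) + Nat.fib (i-2) := by
        have e2 : i - 2 + 2 = i := by have := hle i hi; omega
        have := Nat.fib_add_two (n := i - 2)
        rw [e2, e] at this
        rw [this]; push_cast; ring
      linear_combination h - hfib
    rw [hx]
    linarith
  }

lemma irr_phi_mul (y : ℕ) (hy : y ≠ 0) : Irrational (phi * y) := by
  have h5 : Irrational (Real.sqrt 5) := by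
    have := (by norm_num : Nat.Prime 5).irrational_sqrt
    simpa using this
  have h1 : Irrational ((y:ℝ) * Real.sqrt 5) := h5.natCast_mul hy
  have h2 : Irrational ((y:ℝ) * Real.sqrt 5 + y) := h1.add_natCast y
  have h3 : Irrational (((y:ℝ) * Real.sqrt 5 + y) / (2:ℕ)) :=
    h2.div_natCast (by norm_num)
  have : phi * (y:ℝ) = ((y:ℝ) * Real.sqrt 5 + y) / (2:ℕ) := by
    unfold phi; push_cast; ring
  rwa [this]

theorem zeckendorf_range_f (S : Finset ℕ) (hS : S.Nonempty)
    (h2 : ∀ i ∈ S, 2 ≤ i) (hcons : ∀ i ∈ S, i + 1 ∉ S)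
    (n : ℕ) (hn : n = ∑ i ∈ S, Nat.fib i) :
    ((∃ x : ℕ, 1 ≤ x ∧ n = f x) ↔ Even (S.min' hS)) ∧
    (Odd (S.min' hS) → ∃ x : ℕ, 1 ≤ x ∧ n = f x + x) := by
  subst hn
  constructor
  · constructor
    · rintro ⟨y, hy1, hyn⟩
      by_contra hne
      have hodd : Odd (S.min' hS) := Nat.not_even_iff_odd.mp hne
      obtain ⟨x, hx1, hxl, hxu⟩ := odd_case S hS h2 hcons hodd
      have h0 : (0:ℝ) ≤ phi * y := mul_nonneg phi_pos.le (Nat.cast_nonneg y)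
      have hfl : ((∑ i ∈ S, Nat.fib i : ℕ) : ℝ) ≤ phi * y := by
        rw [hyn]; exact Nat.floor_le h0
      have hirr : Irrational (phi * y) := irr_phi_mul y (by omega)
      have hlt : ((∑ i ∈ S, Nat.fib i : ℕ) : ℝ) < phi * y :=
        lt_of_le_of_ne hfl (fun h => hirr.ne_nat _ h.symm)
      have hup : phi * (y:ℝ) < ((∑ i ∈ S, Nat.fib i : ℕ) : ℝ) + 1 := by
        have := Nat.lt_floor_add_one (phi * (y:ℝ))
        calc phi * (y:ℝ) < (⌊phi * (y:ℝ)⌋₊ : ℝ) + 1 := this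
          _ = ((∑ i ∈ S, Nat.fib i : ℕ) : ℝ) + 1 := by
              unfold f at hyn; rw [← hyn]
      have hsq := phi_sq
      have hp := phi_pos
      have hN1 : ((∑ i ∈ S, Nat.fib i : ℕ) : ℝ) < (x:ℝ) + y := by nlinarith
      have hN2 : (x:ℝ) + y < ((∑ i ∈ S, Nat.fib i : ℕ) : ℝ) + 1 := by nlinarith
      have c1 : (∑ i ∈ S, Nat.fib i) < x + y := by exact_mod_cast hN1
      have c2 : x + y < (∑ i ∈ S, Nat.fib i) + 1 := by exact_mod_cast hN2
      omega
    · intro heven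
      exact even_case S hS h2 hcons heven
  · intro hodd
    obtain ⟨x, hx1, hxl, hxu⟩ := odd_case S hS h2 hcons hodd
    refine ⟨x, hx1, ?_⟩
    have h0 : (0:ℝ) ≤ phi * x := mul_nonneg phi_pos.le (Nat.cast_nonneg x)
    have hfl : ⌊phi * (x:ℝ) + (x:ℕ)⌋₊ = ⌊phi * (x:ℝ)⌋₊ + x := Nat.floor_add_natCast h0 x
    have heq : ⌊phi * (x:ℝ) + (x:ℕ)⌋₊ = ∑ i ∈ S, Nat.fib i := by
      refine (Nat.floor_eq_iff (by positivity)).mpr ⟨?_, ?_⟩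
      · have : (phi + 1) * (x:ℝ) = phi * x + x := by ring
        rw [← this]; linarith
      · have : (phi + 1) * (x:ℝ) = phi * x + x := by ring
        rw [← this]; push_cast at hxu ⊢; linarith
    unfold f
    omega
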